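/- For the root system of type E7: for every nonempty subset J of {0,1,…,7} inducing a connected subgraph of the extended Dynkin diagram, the vector φ(J) is a positive root of E7; and the map φ, from the set of all such subsets J to the set of positive roots, is injective. -/

import Mathlib

/-- The Cartan matrix of type `E₇` in Bourbaki's numbering. -/
def E7Cartan : Matrix (Fin 7) (Fin 7) ℤ :=
  !![2,0,-1,0,0,0,0;
     0,2,0,-1,0,0,0;
     -1,0,2,-1,0,0,0;
     0,-1,-1,2,-1,0,0;
     0,0,0,-1,2,-1,0;
     0,0,0,0,-1,2,-1;
     0,0,0,0,0,-1,2]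

/-- The 63 positive roots of `E₇`: roots (coefficient vectors `v` with
`vᵀ C v = 2`) all of whose coordinates are nonnegative. -/
def E7PosRoots : Set (Fin 7 → ℤ) :=
  {v | (∑ i, ∑ j, v i * E7Cartan i j * v j = 2) ∧ ∀ j, 0 ≤ v j}

/-- The highest root `α̃₀ = 2α₁ + 2α₂ + 3α₃ + 4α₄ + 3α₅ + 2α₆ + α₇` of `E₇`. -/
def E7Highest : Fin 7 → ℤ := ![2, 2, 3, 4, 3, 2, 1]

/-- The simple root `αᵢ` (for `1 ≤ i ≤ 7`) as a coefficient vector; node `0`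
(the affine node) is sent to `0`. -/
def E7SimpleRoot (i : Fin 8) : Fin 7 → ℤ :=
  fun j => if (i : ℕ) = (j : ℕ) + 1 then 1 else 0

/-- The extended Dynkin diagram of `E₇`: vertex set `{0, 1, …, 7}`, edges
`0–1, 1–3, 3–4, 4–5, 5–6, 6–7, 2–4`. -/
def E7ExtGraph : SimpleGraph (Fin 8) :=
  SimpleGraph.fromEdgeSet {s(0,1), s(1,3), s(3,4), s(4,5), s(5,6), s(6,7), s(2,4)}

/-- The map `φ` from connected subsets of the extended Dynkin diagram to roots:
`φ(J) = Σ_{i∈J} αᵢ` if `0 ∉ J`, and `φ(J) = α̃₀ − Σ_{i∈J, i≠0} αᵢ` if `0 ∈ J`. -/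
def E7phi (J : Finset (Fin 8)) : Fin 7 → ℤ :=
  if 0 ∈ J then E7Highest - ∑ i ∈ J.erase 0, E7SimpleRoot i
  else ∑ i ∈ J, E7SimpleRoot i

/-! ### Auxiliary machinery -/

/-- Boolean adjacency for the extended Dynkin diagram of `E₇`. -/
def adjB (x y : Fin 8) : Bool :=
  match x.val, y.val with
  | 0,1 | 1,0 | 1,3 | 3,1 | 3,4 | 4,3 | 4,5 | 5,4 | 5,6 | 6,5 | 6,7 | 7,6 | 2,4 | 4,2 => true
  | _,_ => false

lemma adjB_of_adj {x y : Fin 8} (h : E7ExtGraph.Adj x y) : adjB x y = true := by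
  rw [E7ExtGraph, SimpleGraph.fromEdgeSet_adj] at h
  obtain ⟨hm, -⟩ := h
  simp only [Set.mem_insert_iff, Set.mem_singleton_iff, Sym2.eq, Sym2.rel_iff',
    Prod.mk.injEq, Prod.swap_prod_mk] at hm
  rcases hm with (⟨h1,h2⟩|⟨h1,h2⟩)|(⟨h1,h2⟩|⟨h1,h2⟩)|(⟨h1,h2⟩|⟨h1,h2⟩)|(⟨h1,h2⟩|⟨h1,h2⟩)|(⟨h1,h2⟩|⟨h1,h2⟩)|(⟨h1,h2⟩|⟨h1,h2⟩)|(⟨h1,h2⟩|⟨h1,h2⟩) <;> subst h1 <;> subst h2 <;> rfl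

/-- One step of the adjacency closure inside `J`. -/
def E7step (J S : Finset (Fin 8)) : Finset (Fin 8) :=
  J.filter (fun y => y ∈ S ∨ ∃ x ∈ S, adjB x y = true)

lemma step_subset (J S : Finset (Fin 8)) : E7step J S ⊆ J := Finset.filter_subset _ _

lemma subset_step {J S : Finset (Fin 8)} (h : S ⊆ J) : S ⊆ E7step J S :=
  fun y hy => Finset.mem_filter.2 ⟨h hy, Or.inl hy⟩

lemma iter_mono (J : Finset (Fin 8)) : ∀ (n : ℕ) (S : Finset (Fin 8)), S ⊆ J →
    (E7step J)^[n] S ⊆ (E7step J)^[n+1] S := by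
  intro n
  induction n with
  | zero => intro S hS; exact subset_step hS
  | succ n ih =>
      intro S hS
      rw [Function.iterate_succ_apply, Function.iterate_succ_apply (n := n+1)]
      exact ih _ (step_subset J S)

lemma iter_le (J : Finset (Fin 8)) {m n : ℕ} (h : m ≤ n) (S : Finset (Fin 8)) (hS : S ⊆ J) :
    (E7step J)^[m] S ⊆ (E7step J)^[n] S := by
  induction n with
  | zero =>
      have : m = 0 := by omega
      subst this; exact fun x hx => hx
  | succ n ih =>
      rcases Nat.lt_or_ge m (n+1) with h' | h'
      · exact (ih (by omega)).trans (iter_mono J n S hS)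
      · have : m = n + 1 := by omega
        subst this; exact fun x hx => hx

lemma walk_mem_iter (J : Finset (Fin 8)) {u v : ↥((J : Set (Fin 8)))}
    (p : (E7ExtGraph.induce (J : Set (Fin 8))).Walk u v) :
    ∀ S : Finset (Fin 8), ↑u ∈ S → ↑v ∈ (E7step J)^[p.length] S := by
  induction p with
  | nil => intro S hu; exact hu
  | @cons a b c h q ih =>
      intro S hu
      have hb : (↑b : Fin 8) ∈ E7step J S := by
        refine Finset.mem_filter.2 ⟨by exact_mod_cast b.2, Or.inr ⟨↑a, hu, adjB_of_adj ?_⟩⟩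
        exact h
      simpa [Function.iterate_succ_apply] using ih (E7step J S) hb

/-- Boolean connectivity test: the adjacency closure of the minimum element
reaches all of `J`. -/
def E7connB (J : Finset (Fin 8)) : Bool :=
  match J.min with
  | none => false
  | some a => decide (J ⊆ (E7step J)^[8] {a})

lemma connected_connB (J : Finset (Fin 8))
    (h : (E7ExtGraph.induce (J : Set (Fin 8))).Connected) : E7connB J = true := by
  unfold E7connB
  rcases hmin : J.min with _ | a
  · exfalso
    obtain ⟨⟨x, hx⟩⟩ := h.nonempty
    have hxJ : x ∈ J := by exact_mod_cast hx
    obtain ⟨b, hb⟩ := Finset.min_of_mem hxJ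
    rw [hmin] at hb
    exact WithTop.coe_ne_top hb.symm
  · simp only [decide_eq_true_iff]
    intro b hb
    have ha : a ∈ J := Finset.mem_of_min hmin
    have hfin : Fintype ↥((J : Set (Fin 8))) := Fintype.ofFinite _
    have hr : (E7ExtGraph.induce (J : Set (Fin 8))).Reachable
        ⟨a, by exact_mod_cast ha⟩ ⟨b, by exact_mod_cast hb⟩ := h.preconnected _ _
    refine hr.elim_path fun pp => ?_
    have hlen : pp.val.length < 8 := by
      have h1 := @SimpleGraph.Walk.IsPath.length_lt _ _ hfin _ _ pp.val pp.property
      have h2 : Fintype.card ↥((J : Set (Fin 8))) ≤ 8 := by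
        have := @Fintype.card_le_of_injective _ _ hfin _ (Subtype.val) Subtype.val_injective
        simpa using this
      omega
    have hmem := walk_mem_iter J pp.val {a} (Finset.mem_singleton_self a)
    exact iter_le J (le_of_lt hlen) {a} (Finset.singleton_subset_iff.2 ha) hmem

set_option maxHeartbeats 4000000 in
set_option maxRecDepth 100000 in
lemma part1B : ∀ J : Finset (Fin 8), E7connB J = true →
    ((∑ i, ∑ j, E7phi J i * E7Cartan i j * E7phi J j) = 2 ∧ ∀ j, 0 ≤ E7phi J j) := by decide

/-! ### Injectivity -/

def E7inc (j : Fin 7) : Fin 8 := ⟨j.val + 1, by omega⟩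

lemma sum_sr (T : Finset (Fin 8)) (j : Fin 7) :
    (∑ i ∈ T, E7SimpleRoot i) j = if E7inc j ∈ T then 1 else 0 := by
  rw [Finset.sum_apply]
  have : ∀ i ∈ T, E7SimpleRoot i j = if i = E7inc j then (1:ℤ) else 0 := by
    intro i _
    unfold E7SimpleRoot E7inc
    congr 1
    simp [Fin.ext_iff]
  rw [Finset.sum_congr rfl this, Finset.sum_ite_eq' T (E7inc j) (fun _ => (1:ℤ))]

lemma phi_apply (J : Finset (Fin 8)) (j : Fin 7) :
    E7phi J j = if 0 ∈ J then E7Highest j - (if E7inc j ∈ J then 1 else 0)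
                else (if E7inc j ∈ J then 1 else 0) := by
  unfold E7phi
  by_cases h0 : 0 ∈ J
  · rw [if_pos h0, if_pos h0]
    have h1 : (∑ i ∈ J.erase 0, E7SimpleRoot i) j = if E7inc j ∈ J.erase 0 then (1:ℤ) else 0 :=
      sum_sr _ j
    have h2 : (E7inc j ∈ J.erase 0) ↔ (E7inc j ∈ J) := by
      rw [Finset.mem_erase]
      exact ⟨fun h => h.2, fun h => ⟨fun hc => Nat.succ_ne_zero _ (congrArg Fin.val hc), h⟩⟩
    rw [Pi.sub_apply, h1, if_congr h2 rfl rfl]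
  · rw [if_neg h0, if_neg h0]
    exact sum_sr _ j

lemma phi_inj (J J' : Finset (Fin 8)) (h : E7phi J = E7phi J') : J = J' := by
  have hap : ∀ j, E7phi J j = E7phi J' j := fun j => congrFun h j
  have hH3 : E7Highest 3 = 4 := rfl
  have h0 : (0 ∈ J) ↔ (0 ∈ J') := by
    have := hap 3
    rw [phi_apply, phi_apply, hH3] at this
    split_ifs at this <;> first | tauto | omega
  have hmem : ∀ j : Fin 7, (E7inc j ∈ J ↔ E7inc j ∈ J') := by
    intro j
    have := hap j
    rw [phi_apply, phi_apply] at this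
    by_cases hj : 0 ∈ J
    · rw [if_pos hj, if_pos (h0.1 hj)] at this
      split_ifs at this <;> first | tauto | omega
    · rw [if_neg hj, if_neg (fun hc => hj (h0.2 hc))] at this
      split_ifs at this <;> first | tauto | omega
  ext a
  by_cases ha : a = 0
  · subst ha; exact h0
  · have h1 : a.val ≠ 0 := fun hh => ha (Fin.ext hh)
    have h2 : a = E7inc ⟨a.val - 1, by omega⟩ := by
      apply Fin.ext; simp [E7inc]; omega
    rw [h2]; exact hmem _

/-- For every nonempty subset `J` of `{0,…,7}` inducing a connected subgraph of the
extended Dynkin diagram of `E₇`, `φ(J)` is a positive root, and `φ` is injective on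
such subsets. -/
theorem e7_phi_into_positive_roots_injective :
    (∀ J : Finset (Fin 8), J.Nonempty →
      (E7ExtGraph.induce (J : Set (Fin 8))).Connected → E7phi J ∈ E7PosRoots) ∧
    (∀ J J' : Finset (Fin 8), J.Nonempty →
      (E7ExtGraph.induce (J : Set (Fin 8))).Connected → J'.Nonempty →
      (E7ExtGraph.induce (J' : Set (Fin 8))).Connected →
      E7phi J = E7phi J' → J = J') := by
  constructor
  · intro J _ hconn
    exact part1B J (connected_connB J hconn)
  · intro J J' _ _ _ _ h
    exact phi_inj J J' h
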